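/- Let M : ℝ₊^p → ℝ₊^p be concave, primitive, positively homogeneous with eigenpair (λ*, z*). Then the limit L(x) = lim_{k→∞} M^k(x)/(λ*)^k exists for all x ∈ ℝ₊^p, and L(x) = P(x)·z* where P : ℝ₊^p → ℝ₊ is concave, positively homogeneous, and P(x) > 0 for all x ≠ 0. -/

import Mathlib

open Filter

namespace KrauseAux

variable {p : ℕ}

lemma M_zero (M : (Fin p → ℝ) → (Fin p → ℝ))
    (hhom : ∀ (α : ℝ), 0 < α → ∀ x : Fin p → ℝ, 0 ≤ x → M (α • x) = α • M x) :
    M 0 = 0 := by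
  have h := hhom 2 (by norm_num) 0 le_rfl
  rw [smul_zero] at h
  funext i
  have := congrFun h i
  simp only [Pi.smul_apply, smul_eq_mul, Pi.zero_apply] at this ⊢
  linarith

lemma superadd (M : (Fin p → ℝ) → (Fin p → ℝ))
    (hconc : ∀ (α : ℝ), 0 ≤ α → α ≤ 1 → ∀ x y : Fin p → ℝ, 0 ≤ x → 0 ≤ y →
      α • M x + (1 - α) • M y ≤ M (α • x + (1 - α) • y))
    (hhom : ∀ (α : ℝ), 0 < α → ∀ x : Fin p → ℝ, 0 ≤ x → M (α • x) = α • M x)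
    (x y : Fin p → ℝ) (hx : 0 ≤ x) (hy : 0 ≤ y) :
    M x + M y ≤ M (x + y) := by
  have h := hconc (1/2) (by norm_num) (by norm_num) x y hx hy
  have e : (1/2 : ℝ) • x + (1 - 1/2 : ℝ) • y = (1/2 : ℝ) • (x + y) := by
    rw [smul_add]; norm_num
  rw [e, hhom (1/2) (by norm_num) _ (add_nonneg hx hy)] at h
  intro i
  have := h i
  simp only [Pi.add_apply, Pi.smul_apply, smul_eq_mul] at this ⊢
  linarith

lemma mono (M : (Fin p → ℝ) → (Fin p → ℝ))
    (hnn : ∀ x : Fin p → ℝ, 0 ≤ x → 0 ≤ M x)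
    (hconc : ∀ (α : ℝ), 0 ≤ α → α ≤ 1 → ∀ x y : Fin p → ℝ, 0 ≤ x → 0 ≤ y →
      α • M x + (1 - α) • M y ≤ M (α • x + (1 - α) • y))
    (hhom : ∀ (α : ℝ), 0 < α → ∀ x : Fin p → ℝ, 0 ≤ x → M (α • x) = α • M x)
    (x y : Fin p → ℝ) (hx : 0 ≤ x) (hxy : x ≤ y) :
    M x ≤ M y := by
  have hyx : 0 ≤ y - x := sub_nonneg.mpr hxy
  have h := superadd M hconc hhom x (y - x) hx hyx
  have e : x + (y - x) = y := by abel
  rw [e] at h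
  calc M x ≤ M x + M (y - x) := le_add_of_nonneg_right (hnn _ hyx)
    _ ≤ M y := h

variable {p : ℕ}

variable (M : (Fin p → ℝ) → (Fin p → ℝ))

lemma it_nn (hnn : ∀ x : Fin p → ℝ, 0 ≤ x → 0 ≤ M x)
    (k : ℕ) (x : Fin p → ℝ) (hx : 0 ≤ x) : 0 ≤ M^[k] x := by
  induction k with
  | zero => simpa using hx
  | succ k ih => rw [Function.iterate_succ_apply']; exact hnn _ ih

lemma it_superadd (hnn : ∀ x : Fin p → ℝ, 0 ≤ x → 0 ≤ M x)
    (hconc : ∀ (α : ℝ), 0 ≤ α → α ≤ 1 → ∀ x y : Fin p → ℝ, 0 ≤ x → 0 ≤ y →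
      α • M x + (1 - α) • M y ≤ M (α • x + (1 - α) • y))
    (hhom : ∀ (α : ℝ), 0 < α → ∀ x : Fin p → ℝ, 0 ≤ x → M (α • x) = α • M x)
    (k : ℕ) (x y : Fin p → ℝ) (hx : 0 ≤ x) (hy : 0 ≤ y) :
    M^[k] x + M^[k] y ≤ M^[k] (x + y) := by
  induction k with
  | zero => simp
  | succ k ih =>
    rw [Function.iterate_succ_apply', Function.iterate_succ_apply',
      Function.iterate_succ_apply']
    calc M (M^[k] x) + M (M^[k] y)
        ≤ M (M^[k] x + M^[k] y) :=
          superadd M hconc hhom _ _ (it_nn M hnn k x hx) (it_nn M hnn k y hy)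
      _ ≤ M (M^[k] (x + y)) :=
          mono M hnn hconc hhom _ _
            (add_nonneg (it_nn M hnn k x hx) (it_nn M hnn k y hy)) ih

lemma it_mono (hnn : ∀ x : Fin p → ℝ, 0 ≤ x → 0 ≤ M x)
    (hconc : ∀ (α : ℝ), 0 ≤ α → α ≤ 1 → ∀ x y : Fin p → ℝ, 0 ≤ x → 0 ≤ y →
      α • M x + (1 - α) • M y ≤ M (α • x + (1 - α) • y))
    (hhom : ∀ (α : ℝ), 0 < α → ∀ x : Fin p → ℝ, 0 ≤ x → M (α • x) = α • M x)
    (k : ℕ) (x y : Fin p → ℝ) (hx : 0 ≤ x) (hxy : x ≤ y) :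
    M^[k] x ≤ M^[k] y := by
  have hyx : 0 ≤ y - x := sub_nonneg.mpr hxy
  have h := it_superadd M hnn hconc hhom k x (y - x) hx hyx
  have e : x + (y - x) = y := by abel
  rw [e] at h
  calc M^[k] x ≤ M^[k] x + M^[k] (y - x) :=
        le_add_of_nonneg_right (it_nn M hnn k _ hyx)
    _ ≤ M^[k] y := h

lemma it_hom (hnn : ∀ x : Fin p → ℝ, 0 ≤ x → 0 ≤ M x)
    (hhom : ∀ (α : ℝ), 0 < α → ∀ x : Fin p → ℝ, 0 ≤ x → M (α • x) = α • M x)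
    (k : ℕ) (α : ℝ) (hα : 0 < α) (x : Fin p → ℝ) (hx : 0 ≤ x) :
    M^[k] (α • x) = α • M^[k] x := by
  induction k with
  | zero => simp
  | succ k ih =>
    rw [Function.iterate_succ_apply', Function.iterate_succ_apply', ih,
      hhom α hα _ (it_nn M hnn k x hx)]

lemma it_zero (hhom : ∀ (α : ℝ), 0 < α → ∀ x : Fin p → ℝ, 0 ≤ x → M (α • x) = α • M x)
    (k : ℕ) : M^[k] (0 : Fin p → ℝ) = 0 := by
  induction k with
  | zero => simp
  | succ k ih => rw [Function.iterate_succ_apply', ih, M_zero M hhom]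

lemma it_conc (hnn : ∀ x : Fin p → ℝ, 0 ≤ x → 0 ≤ M x)
    (hconc : ∀ (α : ℝ), 0 ≤ α → α ≤ 1 → ∀ x y : Fin p → ℝ, 0 ≤ x → 0 ≤ y →
      α • M x + (1 - α) • M y ≤ M (α • x + (1 - α) • y))
    (hhom : ∀ (α : ℝ), 0 < α → ∀ x : Fin p → ℝ, 0 ≤ x → M (α • x) = α • M x)
    (k : ℕ) (α : ℝ) (hα0 : 0 ≤ α) (hα1 : α ≤ 1) (x y : Fin p → ℝ)
    (hx : 0 ≤ x) (hy : 0 ≤ y) :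
    α • M^[k] x + (1 - α) • M^[k] y ≤ M^[k] (α • x + (1 - α) • y) := by
  induction k with
  | zero => simp
  | succ k ih =>
    rw [Function.iterate_succ_apply', Function.iterate_succ_apply',
      Function.iterate_succ_apply']
    calc α • M (M^[k] x) + (1 - α) • M (M^[k] y)
        ≤ M (α • M^[k] x + (1 - α) • M^[k] y) :=
          hconc α hα0 hα1 _ _ (it_nn M hnn k x hx) (it_nn M hnn k y hy)
      _ ≤ M (M^[k] (α • x + (1 - α) • y)) := by
          refine mono M hnn hconc hhom _ _ ?_ ih
          exact add_nonneg (smul_nonneg hα0 (it_nn M hnn k x hx))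
            (smul_nonneg (by linarith) (it_nn M hnn k y hy))

lemma eig_smul (hhom : ∀ (α : ℝ), 0 < α → ∀ x : Fin p → ℝ, 0 ≤ x → M (α • x) = α • M x)
    (lam : ℝ) (zs : Fin p → ℝ) (hzs0 : 0 ≤ zs) (heig : M zs = lam • zs)
    (t : ℝ) (ht : 0 ≤ t) : M (t • zs) = (t * lam) • zs := by
  rcases eq_or_lt_of_le ht with h | h
  · rw [← h]; simp [M_zero M hhom]
  · rw [hhom t h zs hzs0, heig, smul_smul]

lemma it_zs (hhom : ∀ (α : ℝ), 0 < α → ∀ x : Fin p → ℝ, 0 ≤ x → M (α • x) = α • M x)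
    (lam : ℝ) (hlam : 0 < lam) (zs : Fin p → ℝ) (hzs0 : 0 ≤ zs) (heig : M zs = lam • zs)
    (k : ℕ) (t : ℝ) (ht : 0 ≤ t) : M^[k] (t • zs) = (t * lam ^ k) • zs := by
  induction k with
  | zero => simp
  | succ k ih =>
    rw [Function.iterate_succ_apply', ih,
      eig_smul M hhom lam zs hzs0 heig _ (by positivity), pow_succ]
    ring_nf

end KrauseAux

namespace KrauseAux
variable {p : ℕ}

lemma clb [NeZero p] (M : (Fin p → ℝ) → (Fin p → ℝ))
    (hnn : ∀ x : Fin p → ℝ, 0 ≤ x → 0 ≤ M x)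
    (hconc : ∀ (α : ℝ), 0 ≤ α → α ≤ 1 → ∀ x y : Fin p → ℝ, 0 ≤ x → 0 ≤ y →
      α • M x + (1 - α) • M y ≤ M (α • x + (1 - α) • y))
    (hhom : ∀ (α : ℝ), 0 < α → ∀ x : Fin p → ℝ, 0 ≤ x → M (α • x) = α • M x)
    (lam : ℝ) (hlam : 0 < lam) (zs : Fin p → ℝ)
    (hzsp : ∀ j, 0 < zs j) (hzsum : ∑ j, zs j = 1) (heig : M zs = lam • zs)
    (n : ℕ)
    (hpn : ∀ x : Fin p → ℝ, 0 ≤ x → x ≠ 0 → ∀ i, 0 < (M^[n] x) i) :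
    ∃ c : ℝ, 0 < c ∧ c ≤ lam ^ n ∧
      ∀ y : Fin p → ℝ, 0 ≤ y → (c * ∑ i, y i) • zs ≤ M^[n] y := by
  haveI : Nonempty (Fin p) := Fin.pos_iff_nonempty.mp (Nat.pos_of_ne_zero (NeZero.ne p))
  set e : Fin p → (Fin p → ℝ) := fun j => Pi.single j (1 : ℝ) with he
  have he_nn : ∀ j, 0 ≤ e j := by
    intro j i
    simp only [he, Pi.single_apply]
    split <;> norm_num
  have he_ne : ∀ j, e j ≠ 0 := by
    intro j h
    have := congrFun h j
    simp [he] at this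
  set δ : ℝ := Finset.univ.inf' Finset.univ_nonempty
      (fun j => Finset.univ.inf' Finset.univ_nonempty (fun i => M^[n] (e j) i)) with hδ
  have hδpos : 0 < δ := by
    rw [hδ, Finset.lt_inf'_iff]
    intro j _
    rw [Finset.lt_inf'_iff]
    intro i _
    exact hpn (e j) (he_nn j) (he_ne j) i
  have hδle : ∀ j i, δ ≤ M^[n] (e j) i := by
    intro j i
    calc δ ≤ Finset.univ.inf' Finset.univ_nonempty (fun i => M^[n] (e j) i) :=
          Finset.inf'_le _ (Finset.mem_univ j)
      _ ≤ M^[n] (e j) i := Finset.inf'_le _ (Finset.mem_univ i)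
  -- superadditivity over finite sums
  have hsum : ∀ (s : Finset (Fin p)) (f : Fin p → (Fin p → ℝ)), (∀ j, 0 ≤ f j) →
      ∑ j ∈ s, M^[n] (f j) ≤ M^[n] (∑ j ∈ s, f j) := by
    intro s
    induction s using Finset.induction with
    | empty => intro f _; simp [it_zero M hhom]
    | insert _ _ hnotmem ih =>
      intro f hf
      rw [Finset.sum_insert hnotmem, Finset.sum_insert hnotmem]
      calc M^[n] (f _) + ∑ j ∈ _, M^[n] (f j)
          ≤ M^[n] (f _) + M^[n] (∑ j ∈ _, f j) := by
            gcongr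
            exact ih f hf
        _ ≤ M^[n] (f _ + ∑ j ∈ _, f j) :=
            it_superadd M hnn hconc hhom n _ _ (hf _)
              (Finset.sum_nonneg fun j _ => hf j)
  have hzs0 : (0 : Fin p → ℝ) ≤ zs := fun j => (hzsp j).le
  have main : ∀ y : Fin p → ℝ, 0 ≤ y → (δ * ∑ i, y i) • zs ≤ M^[n] y := by
    intro y hy
    have hdecomp : ∑ j, (y j • e j) = y := by
      funext i
      simp [he, Pi.single_apply, mul_ite, Finset.sum_ite_eq]
    have h1 : ∑ j, M^[n] (y j • e j) ≤ M^[n] y := by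
      have := hsum Finset.univ (fun j => y j • e j)
        (fun j => smul_nonneg (hy j) (he_nn j))
      rwa [hdecomp] at this
    have h2 : ∀ j, M^[n] (y j • e j) = y j • M^[n] (e j) := by
      intro j
      rcases eq_or_lt_of_le (hy j) with h | h
      · rw [← h]; simp [it_zero M hhom]
      · exact it_hom M hnn hhom n _ h _ (he_nn j)
    have hsum_nn : (0:ℝ) ≤ ∑ j, y j := Finset.sum_nonneg fun j _ => hy j
    intro i
    have hzi1 : zs i ≤ 1 := by
      rw [← hzsum]
      exact Finset.single_le_sum (fun j _ => (hzsp j).le) (Finset.mem_univ i)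
    calc ((δ * ∑ j, y j) • zs) i = (δ * ∑ j, y j) * zs i := rfl
      _ ≤ (δ * ∑ j, y j) * 1 :=
          mul_le_mul_of_nonneg_left hzi1 (by positivity)
      _ = ∑ j, y j * δ := by rw [← Finset.sum_mul]; ring
      _ ≤ ∑ j, y j * M^[n] (e j) i :=
          Finset.sum_le_sum fun j _ => mul_le_mul_of_nonneg_left (hδle j i) (hy j)
      _ = (∑ j, y j • M^[n] (e j)) i := by simp [Finset.sum_apply]
      _ = (∑ j, M^[n] (y j • e j)) i := by
          rw [Finset.sum_congr rfl fun j _ => (h2 j)]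
      _ ≤ M^[n] y i := h1 i
  refine ⟨δ, hδpos, ?_, main⟩
  have h := main zs hzs0
  rw [hzsum] at h
  have hz : M^[n] zs = ((1:ℝ) * lam ^ n) • zs := by
    have := it_zs M hhom lam hlam zs hzs0 heig n 1 (by norm_num)
    rwa [one_smul] at this
  rw [hz] at h
  obtain ⟨i0⟩ := (inferInstance : Nonempty (Fin p))
  have hi := h i0
  simp only [Pi.smul_apply, smul_eq_mul, mul_one, one_mul] at hi
  exact le_of_mul_le_mul_right hi (hzsp i0)

end KrauseAux

namespace KrauseAux
variable {p : ℕ}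

lemma v_succ (M : (Fin p → ℝ) → (Fin p → ℝ))
    (hnn : ∀ x : Fin p → ℝ, 0 ≤ x → 0 ≤ M x)
    (hhom : ∀ (α : ℝ), 0 < α → ∀ x : Fin p → ℝ, 0 ≤ x → M (α • x) = α • M x)
    (lam : ℝ) (hlam : 0 < lam) (x : Fin p → ℝ) (hx : 0 ≤ x) (k : ℕ) :
    (lam ^ (k+1))⁻¹ • M^[k+1] x = lam⁻¹ • M ((lam ^ k)⁻¹ • M^[k] x) := by
  rw [hhom _ (inv_pos.mpr (pow_pos hlam k)) _ (it_nn M hnn k x hx),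
    Function.iterate_succ_apply', smul_smul, ← mul_inv, ← pow_succ']

lemma persist_low (M : (Fin p → ℝ) → (Fin p → ℝ))
    (hnn : ∀ x : Fin p → ℝ, 0 ≤ x → 0 ≤ M x)
    (hconc : ∀ (α : ℝ), 0 ≤ α → α ≤ 1 → ∀ x y : Fin p → ℝ, 0 ≤ x → 0 ≤ y →
      α • M x + (1 - α) • M y ≤ M (α • x + (1 - α) • y))
    (hhom : ∀ (α : ℝ), 0 < α → ∀ x : Fin p → ℝ, 0 ≤ x → M (α • x) = α • M x)
    (lam : ℝ) (hlam : 0 < lam) (zs : Fin p → ℝ) (hzs0 : 0 ≤ zs)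
    (heig : M zs = lam • zs)
    (x : Fin p → ℝ) (hx : 0 ≤ x) (t : ℝ) (ht : 0 ≤ t) (m : ℕ)
    (h : t • zs ≤ (lam ^ m)⁻¹ • M^[m] x) :
    ∀ k, m ≤ k → t • zs ≤ (lam ^ k)⁻¹ • M^[k] x := by
  intro k hk
  induction k, hk using Nat.le_induction with
  | base => exact h
  | succ k hk ih =>
    have h1 : M (t • zs) ≤ M ((lam ^ k)⁻¹ • M^[k] x) :=
      mono M hnn hconc hhom _ _ (smul_nonneg ht hzs0) ih
    rw [eig_smul M hhom lam zs hzs0 heig t ht] at h1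
    rw [v_succ M hnn hhom lam hlam x hx k]
    intro i
    have h2 := h1 i
    simp only [Pi.smul_apply, smul_eq_mul] at h2 ⊢
    calc t * zs i = lam⁻¹ * (t * lam * zs i) := by field_simp
      _ ≤ lam⁻¹ * M ((lam ^ k)⁻¹ • M^[k] x) i :=
          mul_le_mul_of_nonneg_left h2 (by positivity)

lemma persist_high (M : (Fin p → ℝ) → (Fin p → ℝ))
    (hnn : ∀ x : Fin p → ℝ, 0 ≤ x → 0 ≤ M x)
    (hconc : ∀ (α : ℝ), 0 ≤ α → α ≤ 1 → ∀ x y : Fin p → ℝ, 0 ≤ x → 0 ≤ y →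
      α • M x + (1 - α) • M y ≤ M (α • x + (1 - α) • y))
    (hhom : ∀ (α : ℝ), 0 < α → ∀ x : Fin p → ℝ, 0 ≤ x → M (α • x) = α • M x)
    (lam : ℝ) (hlam : 0 < lam) (zs : Fin p → ℝ) (hzs0 : 0 ≤ zs)
    (heig : M zs = lam • zs)
    (x : Fin p → ℝ) (hx : 0 ≤ x) (b : ℝ) (hb : 0 ≤ b) (m : ℕ)
    (h : (lam ^ m)⁻¹ • M^[m] x ≤ b • zs) :
    ∀ k, m ≤ k → (lam ^ k)⁻¹ • M^[k] x ≤ b • zs := by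
  intro k hk
  induction k, hk using Nat.le_induction with
  | base => exact h
  | succ k hk ih =>
    have hw : (0 : Fin p → ℝ) ≤ (lam ^ k)⁻¹ • M^[k] x :=
      smul_nonneg (by positivity) (it_nn M hnn k x hx)
    have h1 : M ((lam ^ k)⁻¹ • M^[k] x) ≤ M (b • zs) :=
      mono M hnn hconc hhom _ _ hw ih
    rw [eig_smul M hhom lam zs hzs0 heig b hb] at h1
    rw [v_succ M hnn hhom lam hlam x hx k]
    intro i
    have h2 := h1 i
    simp only [Pi.smul_apply, smul_eq_mul] at h2 ⊢
    calc lam⁻¹ * M ((lam ^ k)⁻¹ • M^[k] x) i ≤ lam⁻¹ * (b * lam * zs i) :=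
          mul_le_mul_of_nonneg_left h2 (by positivity)
      _ = b * zs i := by field_simp

end KrauseAux

namespace KrauseAux
variable {p : ℕ}

lemma contr (M : (Fin p → ℝ) → (Fin p → ℝ))
    (hnn : ∀ x : Fin p → ℝ, 0 ≤ x → 0 ≤ M x)
    (hconc : ∀ (α : ℝ), 0 ≤ α → α ≤ 1 → ∀ x y : Fin p → ℝ, 0 ≤ x → 0 ≤ y →
      α • M x + (1 - α) • M y ≤ M (α • x + (1 - α) • y))
    (hhom : ∀ (α : ℝ), 0 < α → ∀ x : Fin p → ℝ, 0 ≤ x → M (α • x) = α • M x)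
    (lam : ℝ) (hlam : 0 < lam) (zs : Fin p → ℝ) (hzs0 : 0 ≤ zs)
    (heig : M zs = lam • zs) (n : ℕ) (c : ℝ)
    (hclb : ∀ y : Fin p → ℝ, 0 ≤ y → (c * ∑ i, y i) • zs ≤ M^[n] y)
    (w : Fin p → ℝ) (hw : 0 ≤ w) (aa bb : ℝ) (ha : 0 ≤ aa) (hb : 0 ≤ bb)
    (h1 : aa • zs ≤ w) (h2 : w ≤ bb • zs) :
    (aa * lam ^ n + c * ((∑ i, w i) - aa * ∑ i, zs i)) • zs ≤ M^[n] w ∧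
    M^[n] w ≤ (bb * lam ^ n - c * (bb * (∑ i, zs i) - ∑ i, w i)) • zs := by
  constructor
  · have hd : 0 ≤ w - aa • zs := sub_nonneg.2 h1
    have hA := it_superadd M hnn hconc hhom n (aa • zs) (w - aa • zs)
      (smul_nonneg ha hzs0) hd
    have e : aa • zs + (w - aa • zs) = w := by abel
    rw [e, it_zs M hhom lam hlam zs hzs0 heig n aa ha] at hA
    have hc1 := hclb _ hd
    have hsum : ∑ j, (w - aa • zs) j = (∑ j, w j) - aa * ∑ j, zs j := by
      simp only [Pi.sub_apply, Pi.smul_apply, smul_eq_mul]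
      rw [Finset.sum_sub_distrib, ← Finset.mul_sum]
    rw [hsum] at hc1
    intro i
    have ha1 := hA i
    have hc2 := hc1 i
    simp only [Pi.add_apply, Pi.smul_apply, smul_eq_mul] at ha1 hc2 ⊢
    ring_nf at ha1 hc2 ⊢
    linarith
  · have hd : 0 ≤ bb • zs - w := sub_nonneg.2 h2
    have hA := it_superadd M hnn hconc hhom n w (bb • zs - w) hw hd
    have e : w + (bb • zs - w) = bb • zs := by abel
    rw [e, it_zs M hhom lam hlam zs hzs0 heig n bb hb] at hA
    have hc1 := hclb _ hd
    have hsum : ∑ j, (bb • zs - w) j = bb * (∑ j, zs j) - ∑ j, w j := by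
      simp only [Pi.sub_apply, Pi.smul_apply, smul_eq_mul]
      rw [Finset.sum_sub_distrib, ← Finset.mul_sum]
    rw [hsum] at hc1
    intro i
    have ha1 := hA i
    have hc2 := hc1 i
    simp only [Pi.add_apply, Pi.smul_apply, smul_eq_mul] at ha1 hc2 ⊢
    ring_nf at ha1 hc2 ⊢
    linarith

end KrauseAux

namespace KrauseAux
variable {p : ℕ}

lemma key [NeZero p] (M : (Fin p → ℝ) → (Fin p → ℝ))
    (hnn : ∀ x : Fin p → ℝ, 0 ≤ x → 0 ≤ M x)
    (hconc : ∀ (α : ℝ), 0 ≤ α → α ≤ 1 → ∀ x y : Fin p → ℝ, 0 ≤ x → 0 ≤ y →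
      α • M x + (1 - α) • M y ≤ M (α • x + (1 - α) • y))
    (hhom : ∀ (α : ℝ), 0 < α → ∀ x : Fin p → ℝ, 0 ≤ x → M (α • x) = α • M x)
    (lam : ℝ) (hlam : 0 < lam) (zs : Fin p → ℝ)
    (hzsp : ∀ j, 0 < zs j) (hzsum : ∑ j, zs j = 1) (heig : M zs = lam • zs)
    (n : ℕ) (hn : 0 < n)
    (hpn : ∀ x : Fin p → ℝ, 0 ≤ x → x ≠ 0 → ∀ i, 0 < (M^[n] x) i)
    (x : Fin p → ℝ) (hx : 0 ≤ x) :
    ∃ A : ℝ, Filter.Tendsto (fun k : ℕ => (lam ^ k)⁻¹ • M^[k] x) Filter.atTop (nhds (A • zs)) := by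
  haveI : Nonempty (Fin p) := Fin.pos_iff_nonempty.mp (Nat.pos_of_ne_zero (NeZero.ne p))
  have hzs0 : (0 : Fin p → ℝ) ≤ zs := fun j => (hzsp j).le
  obtain ⟨c, hc0, hcμ, hclb⟩ := clb M hnn hconc hhom lam hlam zs hzsp hzsum heig n hpn
  set μ : ℝ := lam ^ n with hμdef
  have hμ0 : 0 < μ := pow_pos hlam n
  set v : ℕ → Fin p → ℝ := fun k => (lam ^ k)⁻¹ • M^[k] x with hvdef
  have hvnn : ∀ k, (0 : Fin p → ℝ) ≤ v k := fun k =>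
    smul_nonneg (by positivity) (it_nn M hnn k x hx)
  have hv0 : v 0 = x := by simp [hvdef]
  have hblock : ∀ k, v (k + n) = μ⁻¹ • M^[n] (v k) := by
    intro k
    have e1 : M^[n] (v k) = (lam ^ k)⁻¹ • M^[k + n] x := by
      rw [hvdef]
      rw [it_hom M hnn hhom n _ (by positivity) _ (it_nn M hnn k x hx),
        ← Function.iterate_add_apply, add_comm n k]
    have e2 : μ⁻¹ * (lam ^ k)⁻¹ = (lam ^ (k + n))⁻¹ := by
      rw [hμdef, ← mul_inv, ← pow_add, add_comm]
    rw [e1, smul_smul, e2]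
  -- the recursive lower-bound sequence
  set a : ℕ → ℝ := fun q => Nat.rec (motive := fun _ => ℝ) 0
    (fun q aq => aq + (c / μ) * ((∑ j, v (n * q) j) - aq)) q with hadef
  have ha0 : a 0 = 0 := rfl
  have has : ∀ q, a (q + 1) = a q + (c / μ) * ((∑ j, v (n * q) j) - a q) := fun q => rfl
  set m0 : ℝ := Finset.univ.inf' Finset.univ_nonempty zs with hm0def
  have hm0 : 0 < m0 := by
    rw [hm0def, Finset.lt_inf'_iff]
    exact fun j _ => hzsp j
  set b0 : ℝ := (∑ j, x j) / m0 with hb0def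
  have hb0 : 0 ≤ b0 := div_nonneg (Finset.sum_nonneg fun j _ => hx j) hm0.le
  have hxb0 : x ≤ b0 • zs := by
    intro i
    calc x i ≤ ∑ j, x j := Finset.single_le_sum (fun j _ => hx j) (Finset.mem_univ i)
      _ = b0 * m0 := by rw [hb0def]; field_simp
      _ ≤ b0 * zs i := mul_le_mul_of_nonneg_left (Finset.inf'_le _ (Finset.mem_univ i)) hb0
  set θ : ℝ := 1 - c / μ with hθdef
  have hθ0 : 0 ≤ θ := sub_nonneg.2 ((div_le_one hμ0).mpr hcμ)
  have hθ1 : θ < 1 := by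
    have : 0 < c / μ := div_pos hc0 hμ0
    rw [hθdef]; linarith
  set b : ℕ → ℝ := fun q => a q + θ ^ q * b0 with hbdef
  have hbq : ∀ q, b q = a q + θ ^ q * b0 := fun q => rfl
  -- invariant
  have inv : ∀ q, 0 ≤ a q ∧ a q • zs ≤ v (n * q) ∧ v (n * q) ≤ b q • zs := by
    intro q
    induction q with
    | zero =>
      refine ⟨le_rfl, ?_, ?_⟩
      · rw [Nat.mul_zero, hv0, ha0, zero_smul]; exact hx
      · rw [Nat.mul_zero, hv0, hbq 0, ha0, pow_zero]
        simpa using hxb0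
    | succ q ih =>
      obtain ⟨h0, h1, h2⟩ := ih
      have hbq0 : 0 ≤ b q := by
        rw [hbq q]; positivity
      obtain ⟨hL, hU⟩ := contr M hnn hconc hhom lam hlam zs hzs0 heig n c hclb
        (v (n * q)) (hvnn _) (a q) (b q) h0 hbq0 h1 h2
      rw [hzsum, mul_one] at hL hU
      have hSa : a q ≤ ∑ j, v (n * q) j := by
        calc a q = ∑ j, a q * zs j := by rw [← Finset.mul_sum, hzsum, mul_one]
          _ ≤ ∑ j, v (n * q) j := Finset.sum_le_sum fun j _ => h1 j
      have hcμnn : (0:ℝ) ≤ c / μ := div_nonneg hc0.le hμ0.le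
      have hanext : 0 ≤ a (q + 1) := by
        rw [has q]
        have := mul_nonneg hcμnn (sub_nonneg.2 hSa)
        linarith
      refine ⟨hanext, ?_, ?_⟩
      · rw [Nat.mul_succ, hblock (n * q)]
        intro i
        have hLi := hL i
        simp only [Pi.smul_apply, smul_eq_mul] at hLi ⊢
        rw [has q]
        calc (a q + c / μ * ((∑ j, v (n * q) j) - a q)) * zs i
            = μ⁻¹ * ((a q * μ + c * ((∑ j, v (n * q) j) - a q)) * zs i) := by
              field_simp
          _ ≤ μ⁻¹ * M^[n] (v (n * q)) i :=
              mul_le_mul_of_nonneg_left hLi (by positivity)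
      · rw [Nat.mul_succ, hblock (n * q)]
        have hbeq : μ⁻¹ * (b q * μ - c * (b q - (∑ j, v (n * q) j))) = b (q + 1) := by
          rw [hbq (q + 1), hbq q, has q, pow_succ, hθdef]
          field_simp; ring
        intro i
        have hUi := hU i
        simp only [Pi.smul_apply, smul_eq_mul] at hUi ⊢
        calc μ⁻¹ * M^[n] (v (n * q)) i
            ≤ μ⁻¹ * ((b q * μ - c * (b q - (∑ j, v (n * q) j))) * zs i) :=
              mul_le_mul_of_nonneg_left hUi (by positivity)
          _ = b (q + 1) * zs i := by rw [← hbeq]; ring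
  -- monotonicity of a and b
  have amono : ∀ q, a q ≤ a (q + 1) := by
    intro q
    obtain ⟨h0, h1, _⟩ := inv q
    have hSa : a q ≤ ∑ j, v (n * q) j := by
      calc a q = ∑ j, a q * zs j := by rw [← Finset.mul_sum, hzsum, mul_one]
        _ ≤ ∑ j, v (n * q) j := Finset.sum_le_sum fun j _ => h1 j
    rw [has q]
    have := mul_nonneg (div_nonneg hc0.le hμ0.le) (sub_nonneg.2 hSa)
    linarith
  have bmono : ∀ q, b (q + 1) ≤ b q := by
    intro q
    obtain ⟨h0, _, h2⟩ := inv q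
    have hSb : (∑ j, v (n * q) j) ≤ b q := by
      calc (∑ j, v (n * q) j) ≤ ∑ j, b q * zs j := Finset.sum_le_sum fun j _ => h2 j
        _ = b q := by rw [← Finset.mul_sum, hzsum, mul_one]
    have hdiff : b (q + 1) - b q = (c / μ) * ((∑ j, v (n * q) j) - b q) := by
      rw [hbq (q + 1), hbq q, has q, pow_succ, hθdef]
      ring
    have hnp := mul_nonpos_of_nonneg_of_nonpos (div_nonneg hc0.le hμ0.le) (sub_nonpos.2 hSb)
    have heq := sub_eq_iff_eq_add.mp hdiff
    rw [heq]
    exact add_le_of_nonpos_left hnp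
  have hbanti : Antitone b := antitone_nat_of_succ_le bmono
  have hab : ∀ q, a q ≤ b q := fun q => by
    rw [hbq q]; exact le_add_of_nonneg_right (by positivity)
  have hbdd : ∀ q, a q ≤ b0 := by
    intro q
    calc a q ≤ b q := hab q
      _ ≤ b 0 := hbanti (Nat.zero_le q)
      _ = b0 := by rw [hbq 0, ha0, pow_zero]; ring
  set A : ℝ := ⨆ q, a q with hAdef
  have hA : Filter.Tendsto a Filter.atTop (nhds A) :=
    tendsto_atTop_ciSup (monotone_nat_of_le_succ amono)
      ⟨b0, by rintro _ ⟨q, rfl⟩; exact hbdd q⟩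
  have hθlim : Filter.Tendsto (fun q : ℕ => θ ^ q) Filter.atTop (nhds 0) :=
    tendsto_pow_atTop_nhds_zero_of_lt_one hθ0 hθ1
  have hB : Filter.Tendsto b Filter.atTop (nhds A) := by
    have := hA.add (hθlim.mul_const b0)
    simpa using this
  -- bounds for all k
  have allk : ∀ k, a (k / n) • zs ≤ v k ∧ v k ≤ b (k / n) • zs := by
    intro k
    obtain ⟨h0, h1, h2⟩ := inv (k / n)
    have hm : n * (k / n) ≤ k := by rw [mul_comm]; exact Nat.div_mul_le_self k n
    have hbq0 : 0 ≤ b (k / n) := h0.trans (hab _)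
    exact ⟨persist_low M hnn hconc hhom lam hlam zs hzs0 heig x hx _ h0 _ h1 k hm,
      persist_high M hnn hconc hhom lam hlam zs hzs0 heig x hx _ hbq0 _ h2 k hm⟩
  have hdiv : Filter.Tendsto (fun k : ℕ => k / n) Filter.atTop Filter.atTop :=
    Filter.tendsto_atTop_atTop.mpr fun q => ⟨q * n, fun k hk => (Nat.le_div_iff_mul_le hn).mpr hk⟩
  refine ⟨A, ?_⟩
  rw [tendsto_pi_nhds]
  intro i
  have hlow : Filter.Tendsto (fun k : ℕ => a (k / n) * zs i) Filter.atTop (nhds (A * zs i)) :=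
    (hA.comp hdiv).mul_const (zs i)
  have hhigh : Filter.Tendsto (fun k : ℕ => b (k / n) * zs i) Filter.atTop (nhds (A * zs i)) :=
    (hB.comp hdiv).mul_const (zs i)
  exact tendsto_of_tendsto_of_tendsto_of_le_of_le hlow hhigh
    (fun k => (allk k).1 i) (fun k => (allk k).2 i)

end KrauseAux


/-- For a concave, primitive, positively homogeneous `M : ℝ₊^p → ℝ₊^p` with eigenpair
`(λ*, z*)`, the limit `L(x) = lim_k M^k(x)/(λ*)^k` exists for all `x ∈ ℝ₊^p` and
equals `P(x)·z*` for a concave, positively homogeneous `P : ℝ₊^p → ℝ₊` which is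
positive on nonzero vectors. -/
theorem krause_limit_functional {p : ℕ} [NeZero p]
    (M : (Fin p → ℝ) → (Fin p → ℝ))
    (hnn : ∀ x : Fin p → ℝ, 0 ≤ x → 0 ≤ M x)
    (hconc : ∀ (α : ℝ), 0 ≤ α → α ≤ 1 → ∀ x y : Fin p → ℝ, 0 ≤ x → 0 ≤ y →
      α • M x + (1 - α) • M y ≤ M (α • x + (1 - α) • y))
    (hhom : ∀ (α : ℝ), 0 < α → ∀ x : Fin p → ℝ, 0 ≤ x → M (α • x) = α • M x)
    (hprim : ∃ n₀ : ℕ, ∀ n ≥ n₀, ∀ x : Fin p → ℝ, 0 ≤ x → x ≠ 0 →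
      ∀ i, 0 < (M^[n] x) i)
    (lam : ℝ) (zs : Fin p → ℝ) (hlam : 0 < lam)
    (hzs : (∀ j, 0 < zs j) ∧ ∑ j, zs j = 1) (heig : M zs = lam • zs) :
    ∃ P : (Fin p → ℝ) → ℝ,
      (∀ x : Fin p → ℝ, 0 ≤ x → 0 ≤ P x) ∧
      (∀ (α : ℝ), 0 ≤ α → α ≤ 1 → ∀ x y : Fin p → ℝ, 0 ≤ x → 0 ≤ y →
        α * P x + (1 - α) * P y ≤ P (α • x + (1 - α) • y)) ∧
      (∀ (α : ℝ), 0 < α → ∀ x : Fin p → ℝ, 0 ≤ x → P (α • x) = α * P x) ∧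
      (∀ x : Fin p → ℝ, 0 ≤ x → x ≠ 0 → 0 < P x) ∧
      (∀ x : Fin p → ℝ, 0 ≤ x →
        Tendsto (fun k : ℕ => (lam ^ k)⁻¹ • M^[k] x) atTop (nhds (P x • zs))) := by
  classical
  obtain ⟨hzsp, hzsum⟩ := hzs
  obtain ⟨n₀, hprim'⟩ := hprim
  set n : ℕ := max n₀ 1 with hndef
  have hn : 0 < n := lt_of_lt_of_le Nat.one_pos (le_max_right _ _)
  have hpn : ∀ x : Fin p → ℝ, 0 ≤ x → x ≠ 0 → ∀ i, 0 < (M^[n] x) i :=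
    fun x hx hx0 i => hprim' n (le_max_left _ _) x hx hx0 i
  haveI hne : Nonempty (Fin p) := Fin.pos_iff_nonempty.mp (Nat.pos_of_ne_zero (NeZero.ne p))
  have hzs0 : (0 : Fin p → ℝ) ≤ zs := fun j => (hzsp j).le
  have hkey := fun (x : Fin p → ℝ) (hx : 0 ≤ x) =>
    KrauseAux.key M hnn hconc hhom lam hlam zs hzsp hzsum heig n hn hpn x hx
  set P : (Fin p → ℝ) → ℝ :=
    fun x => if hx : 0 ≤ x then (hkey x hx).choose else 0 with hPdef
  have hP : ∀ x : Fin p → ℝ, 0 ≤ x →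
      Tendsto (fun k : ℕ => (lam ^ k)⁻¹ • M^[k] x) atTop (nhds (P x • zs)) := by
    intro x hx
    have hPx : P x = (hkey x hx).choose := by
      simp only [hPdef]; exact dif_pos hx
    rw [hPx]
    exact (hkey x hx).choose_spec
  have hvnn : ∀ (x : Fin p → ℝ), 0 ≤ x → ∀ k, (0 : Fin p → ℝ) ≤ (lam ^ k)⁻¹ • M^[k] x :=
    fun x hx k => smul_nonneg (by positivity) (KrauseAux.it_nn M hnn k x hx)
  obtain ⟨i0⟩ := hne
  -- nonnegativity
  have hPnn : ∀ x : Fin p → ℝ, 0 ≤ x → 0 ≤ P x := by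
    intro x hx
    have hti := (tendsto_pi_nhds.mp (hP x hx)) i0
    have h0 : 0 ≤ P x * zs i0 :=
      ge_of_tendsto hti (Filter.Eventually.of_forall fun k => hvnn x hx k i0)
    nlinarith [hzsp i0]
  refine ⟨P, hPnn, ?_, ?_, ?_, hP⟩
  · -- concavity
    intro α hα0 hα1 x y hx hy
    have hw : 0 ≤ α • x + (1 - α) • y :=
      add_nonneg (smul_nonneg hα0 hx) (smul_nonneg (by linarith) hy)
    have hx' := (tendsto_pi_nhds.mp (hP x hx)) i0
    have hy' := (tendsto_pi_nhds.mp (hP y hy)) i0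
    have hw' := (tendsto_pi_nhds.mp (hP _ hw)) i0
    have hcomb := (hx'.const_mul α).add (hy'.const_mul (1 - α))
    have hle : ∀ k : ℕ,
        α * ((lam ^ k)⁻¹ • M^[k] x) i0 + (1 - α) * ((lam ^ k)⁻¹ • M^[k] y) i0 ≤
        ((lam ^ k)⁻¹ • M^[k] (α • x + (1 - α) • y)) i0 := by
      intro k
      have hki := KrauseAux.it_conc M hnn hconc hhom k α hα0 hα1 x y hx hy i0
      simp only [Pi.add_apply, Pi.smul_apply, smul_eq_mul] at hki ⊢
      calc α * ((lam ^ k)⁻¹ * M^[k] x i0) + (1 - α) * ((lam ^ k)⁻¹ * M^[k] y i0)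
          = (lam ^ k)⁻¹ * (α * M^[k] x i0 + (1 - α) * M^[k] y i0) := by ring
        _ ≤ (lam ^ k)⁻¹ * M^[k] (α • x + (1 - α) • y) i0 :=
            mul_le_mul_of_nonneg_left hki (by positivity)
    have hfin := le_of_tendsto_of_tendsto' hcomb hw' hle
    simp only [Pi.smul_apply, smul_eq_mul] at hfin
    have h2 : (α * P x + (1 - α) * P y) * zs i0 ≤ P (α • x + (1 - α) • y) * zs i0 := by
      nlinarith
    exact le_of_mul_le_mul_right h2 (hzsp i0)
  · -- homogeneity
    intro α hα x hx
    have hax : 0 ≤ α • x := smul_nonneg hα.le hx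
    have h1 : Tendsto (fun k : ℕ => (lam ^ k)⁻¹ • M^[k] (α • x)) atTop
        (nhds ((α * P x) • zs)) := by
      have he : (fun k : ℕ => (lam ^ k)⁻¹ • M^[k] (α • x)) =
          fun k : ℕ => α • ((lam ^ k)⁻¹ • M^[k] x) := by
        funext k
        rw [KrauseAux.it_hom M hnn hhom k α hα x hx, smul_comm]
      rw [he]
      have := (hP x hx).const_smul α
      rwa [smul_smul] at this
    have heq := tendsto_nhds_unique (hP _ hax) h1
    have heqi := congrFun heq i0
    simp only [Pi.smul_apply, smul_eq_mul] at heqi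
    exact mul_right_cancel₀ (ne_of_gt (hzsp i0)) heqi
  · -- positivity
    intro x hx hx0
    obtain ⟨c, hc0, hcμ, hclb⟩ :=
      KrauseAux.clb M hnn hconc hhom lam hlam zs hzsp hzsum heig n hpn
    have hsx : 0 < ∑ j, x j := by
      have hex : ∃ i, x i ≠ 0 := by
        by_contra h
        push_neg at h
        exact hx0 (funext fun i => h i)
      obtain ⟨i, hi⟩ := hex
      exact Finset.sum_pos' (fun j _ => hx j)
        ⟨i, Finset.mem_univ i, lt_of_le_of_ne (hx i) (Ne.symm hi)⟩
    set t : ℝ := (c * ∑ j, x j) / lam ^ n with htdef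
    have ht0 : 0 < t := by positivity
    have hbn : t • zs ≤ (lam ^ n)⁻¹ • M^[n] x := by
      have h := hclb x hx
      intro i
      have hi := h i
      simp only [Pi.smul_apply, smul_eq_mul] at hi ⊢
      rw [htdef]
      calc (c * ∑ j, x j) / lam ^ n * zs i
          = (lam ^ n)⁻¹ * ((c * ∑ j, x j) * zs i) := by ring
        _ ≤ (lam ^ n)⁻¹ * M^[n] x i :=
            mul_le_mul_of_nonneg_left hi (by positivity)
    have hall := KrauseAux.persist_low M hnn hconc hhom lam hlam zs hzs0 heig
      x hx t ht0.le n hbn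
    have hti := (tendsto_pi_nhds.mp (hP x hx)) i0
    have hge : t * zs i0 ≤ P x * zs i0 :=
      ge_of_tendsto hti (Filter.eventually_atTop.mpr ⟨n, fun k hk => (hall k hk) i0⟩)
    have htP : t ≤ P x := le_of_mul_le_mul_right hge (hzsp i0)
    linarith
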